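/- Fix an integer k ≥ 2 and let a^j_ℓ be the coefficient of T^{j−ℓ} in Q^{j+1}, where Q = T/(e^T − 1). For every integer j ≥ 1 there exist real numbers γ_1, …, γ_j such that for every ℓ ∈ {0, 1, …, j−1}: Σ_{j'=ℓ+1}^{j} a^j_{j'} · (−1/k)^{j'−ℓ} / (j'−ℓ)! = Σ_{s=ℓ}^{j−1} γ_{j−s} · a^s_ℓ. -/

import Mathlib

/-- `a j ℓ` is the coefficient of `T^(j-ℓ)` in `Q^(j+1)`, where
`Q = T/(eᵀ - 1)` is the Bernoulli generating power series (with `B₁ = -1/2`). -/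
noncomputable def bernCoef (j ℓ : ℕ) : ℚ :=
  PowerSeries.coeff (j - ℓ) ((bernoulliPowerSeries ℚ) ^ (j + 1))

lemma bernCoef_self (ℓ : ℕ) : bernCoef ℓ ℓ = 1 := by
  simp [bernCoef, Nat.sub_self, PowerSeries.coeff_zero_eq_constantCoeff, map_pow,
    bernoulliPowerSeries, PowerSeries.coeff_mk]

noncomputable def gamF (g : ℕ → ℝ) (a : ℕ → ℕ → ℝ) : ℕ → ℝ
  | m => g m - ∑ m' ∈ (Finset.range m).attach, gamF g a m'.1 * a m'.1 m
decreasing_by exact Finset.mem_range.mp m'.2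

lemma gamF_eq (g : ℕ → ℝ) (a : ℕ → ℕ → ℝ) (m : ℕ) :
    gamF g a m = g m - ∑ m' ∈ Finset.range m, gamF g a m' * a m' m := by
  rw [gamF]
  congr 1
  exact Finset.sum_attach _ fun m' => gamF g a m' * a m' m

/-- For every `j ≥ 1` there exist reals `γ_1, …, γ_j` such that for every `0 ≤ ℓ ≤ j-1`:
`Σ_{j'=ℓ+1}^{j} a^j_{j'} (-1/k)^{j'-ℓ} / (j'-ℓ)! = Σ_{s=ℓ}^{j-1} γ_{j-s} a^s_ℓ`. -/
theorem exists_gamma (k : ℕ) (hk : 2 ≤ k) (j : ℕ) (hj : 1 ≤ j) :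
    ∃ γ : ℕ → ℝ, ∀ ℓ : ℕ, ℓ < j →
      ∑ j' ∈ Finset.Icc (ℓ + 1) j,
          (bernCoef j j' : ℝ) * (-1 / (k : ℝ)) ^ (j' - ℓ) / (Nat.factorial (j' - ℓ) : ℝ)
        = ∑ s ∈ Finset.Icc ℓ (j - 1), γ (j - s) * (bernCoef s ℓ : ℝ) := by
  set L : ℕ → ℝ := fun ℓ => ∑ j' ∈ Finset.Icc (ℓ + 1) j,
      (bernCoef j j' : ℝ) * (-1 / (k : ℝ)) ^ (j' - ℓ) / (Nat.factorial (j' - ℓ) : ℝ) with hL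
  set a' : ℕ → ℕ → ℝ := fun m' m =>
      if m' = 0 then 0 else (bernCoef (j - m') (j - m) : ℝ) with ha'
  set γ : ℕ → ℝ := gamF (fun m => L (j - m)) a' with hγ
  refine ⟨γ, fun ℓ hℓ => ?_⟩
  set m : ℕ := j - ℓ with hm
  have hm1 : 1 ≤ m := Nat.sub_pos_of_lt hℓ
  have hℓm : j - m = ℓ := Nat.sub_sub_self hℓ.le
  -- reindex RHS by m' = j - s
  have step1 : ∑ s ∈ Finset.Icc ℓ (j - 1), γ (j - s) * (bernCoef s ℓ : ℝ)
      = ∑ m' ∈ Finset.Icc 1 m, γ m' * (bernCoef (j - m') ℓ : ℝ) := by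
    refine Finset.sum_nbij' (fun s => j - s) (fun m' => j - m') ?_ ?_ ?_ ?_ ?_
    · intro s hs
      simp only [Finset.mem_Icc] at hs ⊢
      constructor
      · omega
      · omega
    · intro m' hm'
      simp only [Finset.mem_Icc] at hm' ⊢
      try dsimp only
      omega
    · intro s hs
      simp only [Finset.mem_Icc] at hs
      omega
    · intro m' hm'
      simp only [Finset.mem_Icc] at hm'
      omega
    · intro s hs
      simp only [Finset.mem_Icc] at hs
      have h1 : j - (j - s) = s := by omega
      rw [h1]
  rw [step1]
  -- split off m' = m
  have hmsucc : m = (m - 1) + 1 := (Nat.succ_pred_eq_of_pos hm1).symm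
  have step2 : ∑ m' ∈ Finset.Icc 1 m, γ m' * (bernCoef (j - m') ℓ : ℝ)
      = (∑ m' ∈ Finset.Icc 1 (m - 1), γ m' * (bernCoef (j - m') ℓ : ℝ))
        + γ m * (bernCoef (j - m) ℓ : ℝ) := by
    rw [hmsucc]
    rw [Finset.sum_Icc_succ_top (by omega)]
    rw [← hmsucc]
  rw [step2, hℓm, bernCoef_self]
  push_cast
  rw [mul_one]
  -- identify tail sum with range sum
  have step3 : ∑ m' ∈ Finset.Icc 1 (m - 1), γ m' * (bernCoef (j - m') ℓ : ℝ)
      = ∑ m' ∈ Finset.range m, γ m' * a' m' m := by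
    rw [Finset.range_eq_Ico, Finset.sum_eq_sum_Ico_succ_bot (by omega)]
    have : a' 0 m = 0 := by simp [ha']
    rw [this, mul_zero, zero_add]
    rw [hmsucc, Finset.Ico_add_one_right_eq_Icc, ← hmsucc]
    refine Finset.sum_congr rfl fun m' hm' => ?_
    simp only [Finset.mem_Icc] at hm'
    have : a' m' m = (bernCoef (j - m') (j - m) : ℝ) := by
      simp [ha', Nat.one_le_iff_ne_zero.mp hm'.1]
    rw [this, hℓm]
  rw [step3]
  have := gamF_eq (fun m => L (j - m)) a' m
  rw [← hγ] at this
  have hgm : γ m + ∑ m' ∈ Finset.range m, γ m' * a' m' m = L (j - m) := by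
    rw [this]; ring
  rw [hℓm] at hgm
  rw [hL] at hgm
  linarith [hgm]
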